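/- Every objective, isotropic and isochoric function W : GL⁺(2) → ℝ satisfies the tension-compression symmetry condition W(F⁻¹) = W(F) for all F ∈ GL⁺(2). -/

import Mathlib

open Matrix Set

noncomputable section

/-- The space of real 2×2 matrices. -/
abbrev Mat2 : Type := Matrix (Fin 2) (Fin 2) ℝ

/-- The special orthogonal group SO(2): orthogonal 2×2 matrices with determinant 1. -/
def SO2 : Set Mat2 := {Q : Mat2 | Qᵀ * Q = 1 ∧ Q.det = 1}

/-- A function `W` (viewed on GL⁺(2) = {F | 0 < det F}) is polyconvex if there is a
convex function `P : ℝ^{2×2} × ℝ → ℝ ∪ {+∞}` with `W F = P (F, det F)` on GL⁺(2). -/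
def Polyconvex (W : Mat2 → ℝ) : Prop :=
  ∃ P : Mat2 × ℝ → EReal,
    (∀ x y : Mat2 × ℝ, ∀ a b : ℝ, 0 ≤ a → 0 ≤ b → a + b = 1 →
      P (a • x + b • y) ≤ (a : EReal) * P x + (b : EReal) * P y) ∧
    (∀ F : Mat2, 0 < F.det → (W F : EReal) = P (F, F.det))

/-- Rank-one convexity of `W` on GL⁺(2): convexity along rank-one line segments
lying in GL⁺(2). -/
def RankOneConvex (W : Mat2 → ℝ) : Prop :=
  ∀ F : Mat2, 0 < F.det → ∀ ξ η : Fin 2 → ℝ, ∀ θ : ℝ, θ ∈ Set.Icc (0:ℝ) 1 →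
    (∀ t ∈ Set.Icc (0:ℝ) 1, 0 < (F + t • vecMulVec ξ η).det) →
    W (F + (1 - θ) • vecMulVec ξ η) ≤ θ * W F + (1 - θ) * W (F + vecMulVec ξ η)

/-- Objectivity and isotropy: bi-SO(2)-invariance on GL⁺(2). -/
def ObjectiveIsotropic (W : Mat2 → ℝ) : Prop :=
  ∀ F : Mat2, 0 < F.det → ∀ Q₁ Q₂ : Mat2, Q₁ ∈ SO2 → Q₂ ∈ SO2 →
    W (Q₁ * F * Q₂) = W F

/-- Isochoric: invariance under positive scaling on GL⁺(2). -/
def Isochoric (W : Mat2 → ℝ) : Prop :=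
  ∀ F : Mat2, 0 < F.det → ∀ a : ℝ, 0 < a → W (a • F) = W F

/-- The 2×2 diagonal matrix diag(a, b). -/
def diag2 (a b : ℝ) : Mat2 := !![a, 0; 0, b]

/-- The squared Frobenius norm of a 2×2 matrix. -/
def frobSq (F : Mat2) : ℝ := ∑ i, ∑ j, (F i j) ^ 2

/-- The operator norm of `F` induced by the Euclidean norm on ℝ²:
the supremum of ‖F·x‖ over Euclidean-unit vectors x. -/
def opNorm2 (F : Mat2) : ℝ :=
  sSup {r : ℝ | ∃ x : Fin 2 → ℝ, (x 0) ^ 2 + (x 1) ^ 2 = 1 ∧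
    r = Real.sqrt ((F.mulVec x 0) ^ 2 + (F.mulVec x 1) ^ 2)}


/-- The 90° rotation matrix. -/
def Jrot : Mat2 := !![0, -1; 1, 0]

lemma Jrot_T : Jrotᵀ = !![0, 1; -1, 0] := by
  ext i j; fin_cases i <;> fin_cases j <;> simp [Jrot, Matrix.transpose_apply]

lemma mul2 (a b c d a' b' c' d' : ℝ) :
    (!![a, b; c, d] : Mat2) * !![a', b'; c', d'] =
      !![a*a' + b*c', a*b' + b*d'; c*a' + d*c', c*b' + d*d'] := by
  ext i j; fin_cases i <;> fin_cases j <;>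
    simp [Matrix.mul_apply, Fin.sum_univ_two]

lemma one2 : (1 : Mat2) = !![1, 0; 0, 1] := by
  ext i j; fin_cases i <;> fin_cases j <;> simp [Matrix.one_apply]

lemma Jrot_mem : Jrot ∈ SO2 := by
  refine ⟨?_, by simp [Jrot, Matrix.det_fin_two_of]⟩
  rw [Jrot_T, Jrot, mul2, one2]; norm_num

lemma Jrot_T_mem : Jrotᵀ ∈ SO2 := by
  constructor
  · rw [Matrix.transpose_transpose, Jrot_T, Jrot, mul2, one2]; norm_num
  · rw [Matrix.det_transpose]; exact Jrot_mem.2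

/-- The 2×2 inverse via the adjugate, expressed with rotations and the transpose. -/
lemma inv_eq_rot (F : Mat2) (h : 0 < F.det) :
    F⁻¹ = (F.det)⁻¹ • (Jrot * Fᵀ * Jrotᵀ) := by
  have hd : F.det = F 0 0 * F 1 1 - F 0 1 * F 1 0 := Matrix.det_fin_two F
  have hne : F 0 0 * F 1 1 - F 0 1 * F 1 0 ≠ 0 := by
    rw [hd] at h; exact ne_of_gt h
  have hne' : -(F 1 0 * F 0 1) + F 0 0 * F 1 1 ≠ 0 := by
    intro h0; apply hne; linarith
  apply Matrix.inv_eq_right_inv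
  rw [Jrot_T]
  ext i j
  fin_cases i <;> fin_cases j <;>
    · simp [Jrot, Matrix.mul_apply, Fin.sum_univ_two, Matrix.smul_apply,
        Matrix.one_apply, Matrix.transpose_apply, hd, Matrix.vecMul, dotProduct]
      generalize F 0 0 = a at hne hne' ⊢; generalize F 0 1 = b at hne hne' ⊢
      generalize F 1 0 = c at hne hne' ⊢; generalize F 1 1 = d at hne hne' ⊢
      have hne'' : a * d - c * b ≠ 0 := by intro h0; apply hne; linarith
      field_simp
      ring

/-- A rotation matrix from (c, s) with c² + s² = 1 is in SO(2). -/
lemma rot_mem (c s : ℝ) (hcs : c ^ 2 + s ^ 2 = 1) :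
    (!![c, -s; s, c] : Mat2) ∈ SO2 := by
  constructor
  · have hT : (!![c, -s; s, c] : Mat2)ᵀ = !![c, s; -s, c] := by
      ext i j; fin_cases i <;> fin_cases j <;> simp [Matrix.transpose_apply]
    rw [hT]
    ext i j
    fin_cases i <;> fin_cases j <;>
      · simp [Matrix.mul_apply, Fin.sum_univ_two, Matrix.one_apply]
        nlinarith [hcs]
  · simp [Matrix.det_fin_two_of]; nlinarith [hcs]

/-- Via the polar decomposition: a bi-SO(2)-invariant `W` is transpose-invariant. -/
lemma transpose_invariant (W : Mat2 → ℝ) (hOI : ObjectiveIsotropic W)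
    (F : Mat2) (h : 0 < F.det) : W Fᵀ = W F := by
  set p := F 0 0 with hp
  set q := F 0 1 with hq
  set u := F 1 0 with hu
  set v := F 1 1 with hv
  have hFe : F = !![p, q; u, v] := by
    rw [hp, hq, hu, hv]; exact Matrix.eta_fin_two F
  obtain ⟨c, s, hcs, hrel⟩ : ∃ c s : ℝ, c ^ 2 + s ^ 2 = 1 ∧ c * (q - u) + s * (p + v) = 0 := by
    by_cases h0 : (p + v) ^ 2 + (u - q) ^ 2 = 0
    · refine ⟨1, 0, by norm_num, ?_⟩
      have h1 : p + v = 0 := by nlinarith [sq_nonneg (p+v), sq_nonneg (u-q)]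
      have h2 : u - q = 0 := by nlinarith [sq_nonneg (p+v), sq_nonneg (u-q)]
      nlinarith
    · have hpos : 0 < (p + v) ^ 2 + (u - q) ^ 2 := by
        rcases lt_or_eq_of_le (by positivity : 0 ≤ (p + v) ^ 2 + (u - q) ^ 2) with h'|h'
        · exact h'
        · exact absurd h'.symm h0
      set r := Real.sqrt ((p + v) ^ 2 + (u - q) ^ 2) with hr
      have hrpos : 0 < r := Real.sqrt_pos.mpr hpos
      have hr2 : r ^ 2 = (p + v) ^ 2 + (u - q) ^ 2 := Real.sq_sqrt hpos.le
      refine ⟨(p + v) / r, (u - q) / r, ?_, ?_⟩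
      · field_simp; nlinarith [hr2]
      · field_simp; ring
  set R : Mat2 := !![c, -s; s, c] with hR
  have hRT : Rᵀ = !![c, s; -s, c] := by
    rw [hR]; ext i j; fin_cases i <;> fin_cases j <;> simp [Matrix.transpose_apply]
  have hRTmem : Rᵀ ∈ SO2 := by
    rw [hRT]
    have := rot_mem c (-s) (by nlinarith)
    simpa using this
  have key : Rᵀ * F * Rᵀ = Fᵀ := by
    have hFT : Fᵀ = !![p, u; q, v] := by
      ext i j; fin_cases i <;> fin_cases j <;>
        simp [Matrix.transpose_apply, hp, hq, hu, hv]
    rw [hRT, hFT, hFe]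
    ext i j
    fin_cases i <;> fin_cases j
    · simp [Matrix.mul_apply, Fin.sum_univ_two]
      linear_combination p * hcs - s * hrel
    · simp [Matrix.mul_apply, Fin.sum_univ_two]
      linear_combination u * hcs + c * hrel
    · simp [Matrix.mul_apply, Fin.sum_univ_two]
      linear_combination q * hcs - c * hrel
    · simp [Matrix.mul_apply, Fin.sum_univ_two]
      linear_combination v * hcs - s * hrel
  calc W Fᵀ = W (Rᵀ * F * Rᵀ) := by rw [key]
    _ = W F := hOI F h Rᵀ Rᵀ hRTmem hRTmem

/-- every objective, isotropic and isochoric `W : GL⁺(2) → ℝ` is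
tension-compression symmetric: `W(F⁻¹) = W(F)`. -/
theorem isochoric_tension_compression_symmetry (W : Mat2 → ℝ)
    (hOI : ObjectiveIsotropic W) (hIso : Isochoric W) :
    ∀ F : Mat2, 0 < F.det → W F⁻¹ = W F := by
  intro F hF
  have hdT : Fᵀ.det = F.det := Matrix.det_transpose F
  have hTpos : 0 < Fᵀ.det := by rw [hdT]; exact hF
  have hMdet : (Jrot * Fᵀ * Jrotᵀ).det = F.det := by
    rw [Matrix.det_mul, Matrix.det_mul, Jrot_mem.2, Jrot_T_mem.2, hdT]
    ring
  have hMpos : 0 < (Jrot * Fᵀ * Jrotᵀ).det := by rw [hMdet]; exact hF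
  calc W F⁻¹ = W ((F.det)⁻¹ • (Jrot * Fᵀ * Jrotᵀ)) := by rw [inv_eq_rot F hF]
    _ = W (Jrot * Fᵀ * Jrotᵀ) := hIso _ hMpos _ (inv_pos.mpr hF)
    _ = W Fᵀ := hOI Fᵀ hTpos Jrot Jrotᵀ Jrot_mem Jrot_T_mem
    _ = W F := transpose_invariant W hOI F hF
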